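/- Let X be a metric space, f : X → ℝ continuous, u ∈ X, and suppose the weak slope |df|(u) is finite. Then the weak slope of the epigraph function G_f at (u, f(u)) (with respect to the product metric d₁) satisfies |dG_f|(u, f(u)) = |df|(u)/√(1 + |df|(u)²); while if |df|(u) = +∞ or f(u) < ξ then |dG_f|(u,ξ) = 1. In particular, |dG_f|(u,ξ) < 1 forces ξ = f(u). -/

import Mathlib

/-- The set of admissible constants `σ` in the definition of the weak slope of `g` at `u`,
with respect to an explicit distance function `dY` (the topology being the ambient one):
`σ ∈ slopeSetD dY g u` iff `σ ≥ 0` and there are `δ > 0` and a continuous deformation `H`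
on the `dY`-ball of radius `δ` with `dY(H(v,t),v) ≤ t` and `g(H(v,t)) ≤ g(v) − σ t`.
The weak slope is the supremum of this set (finite iff the set is bounded above). -/
def slopeSetD {Y : Type*} [TopologicalSpace Y] (dY : Y → Y → ℝ) (g : Y → ℝ) (u : Y) :
    Set ℝ :=
  {σ | 0 ≤ σ ∧ ∃ δ : ℝ, 0 < δ ∧ ∃ H : Y → ℝ → Y,
    ContinuousOn (fun q : Y × ℝ => H q.1 q.2) ({v | dY u v < δ} ×ˢ Set.Icc 0 δ) ∧
    ∀ v, dY u v < δ → ∀ t ∈ Set.Icc (0 : ℝ) δ,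
      dY (H v t) v ≤ t ∧ g (H v t) ≤ g v - σ * t}

/-- The metric `d₁` on the epigraph of a continuous `f : X → ℝ`. -/
noncomputable def epiDist {X : Type*} [MetricSpace X] (f : X → ℝ) :
    {p : X × ℝ // f p.1 ≤ p.2} → {p : X × ℝ // f p.1 ≤ p.2} → ℝ :=
  fun p q => Real.sqrt (dist p.1.1 q.1.1 ^ 2 + (p.1.2 - q.1.2) ^ 2)

/-- The epigraph function `G_f(u,ξ) = ξ`. -/
def epiFun {X : Type*} [MetricSpace X] (f : X → ℝ) : {p : X × ℝ // f p.1 ≤ p.2} → ℝ :=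
  fun p => p.1.2


noncomputable def phiW (x : ℝ) : ℝ := x / Real.sqrt (1 + x ^ 2)
noncomputable def psiW (t : ℝ) : ℝ := t / Real.sqrt (1 - t ^ 2)

lemma le_of_sq_le_sq' {a b : ℝ} (ha : 0 ≤ a) (hb : 0 ≤ b) (h : a ^ 2 ≤ b ^ 2) : a ≤ b :=
  calc a = Real.sqrt (a ^ 2) := (Real.sqrt_sq ha).symm
    _ ≤ Real.sqrt (b ^ 2) := Real.sqrt_le_sqrt h
    _ = b := Real.sqrt_sq hb

lemma lt_of_sq_lt_sq' {a b : ℝ} (hb : 0 ≤ b) (h : a ^ 2 < b ^ 2) : a < b :=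
  calc a ≤ |a| := le_abs_self a
    _ = Real.sqrt (a ^ 2) := (Real.sqrt_sq_eq_abs a).symm
    _ < Real.sqrt (b ^ 2) := Real.sqrt_lt_sqrt (sq_nonneg a) h
    _ = b := Real.sqrt_sq hb

lemma sqrt1p_pos (x : ℝ) : 0 < Real.sqrt (1 + x ^ 2) := Real.sqrt_pos.2 (by nlinarith)

lemma phiW_nonneg {x : ℝ} (hx : 0 ≤ x) : 0 ≤ phiW x := div_nonneg hx (sqrt1p_pos x).le

lemma phiW_lt_one (x : ℝ) : phiW x < 1 := by
  unfold phiW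
  rw [div_lt_one (sqrt1p_pos x)]
  have h := Real.sq_sqrt (show (0:ℝ) ≤ 1 + x ^ 2 by nlinarith)
  nlinarith [sqrt1p_pos x, abs_nonneg x, le_abs_self x, sq_abs x]

lemma phiW_mono {x y : ℝ} (hx : 0 ≤ x) (hxy : x ≤ y) : phiW x ≤ phiW y := by
  unfold phiW
  rw [div_le_div_iff₀ (sqrt1p_pos x) (sqrt1p_pos y)]
  have hx2 := Real.sq_sqrt (show (0:ℝ) ≤ 1 + x ^ 2 by nlinarith)
  have hy2 := Real.sq_sqrt (show (0:ℝ) ≤ 1 + y ^ 2 by nlinarith)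
  apply le_of_sq_le_sq' (mul_nonneg hx (Real.sqrt_nonneg _)) (mul_nonneg (hx.trans hxy) (Real.sqrt_nonneg _))
  rw [mul_pow, mul_pow, hx2, hy2]
  nlinarith

lemma le_of_phiW_le {x y : ℝ} (hy : 0 ≤ y) (h : phiW x ≤ phiW y) : x ≤ y := by
  by_contra hlt
  push_neg at hlt
  have hstrict : phiW y < phiW x := by
    unfold phiW
    rw [div_lt_div_iff₀ (sqrt1p_pos y) (sqrt1p_pos x)]
    have hx2 := Real.sq_sqrt (show (0:ℝ) ≤ 1 + x ^ 2 by nlinarith)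
    have hy2 := Real.sq_sqrt (show (0:ℝ) ≤ 1 + y ^ 2 by nlinarith)
    apply lt_of_sq_lt_sq' (mul_nonneg (hy.trans hlt.le) (Real.sqrt_nonneg _))
    rw [mul_pow, mul_pow, hx2, hy2]
    nlinarith
  linarith

lemma lt_of_phiW_lt {x y : ℝ} (hx : 0 ≤ x) (h : phiW x < phiW y) : x < y := by
  by_contra hle
  push_neg at hle
  rcases le_or_gt 0 y with hy | hy
  · exact absurd (phiW_mono hy hle) (not_le.2 h)
  · have : phiW y < 0 := div_neg_of_neg_of_pos hy (sqrt1p_pos y)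
    linarith [phiW_nonneg hx]

lemma psiW_nonneg {t : ℝ} (ht : 0 ≤ t) : 0 ≤ psiW t := div_nonneg ht (Real.sqrt_nonneg _)

lemma phiW_psiW {t : ℝ} (ht0 : 0 ≤ t) (ht1 : t < 1) : phiW (psiW t) = t := by
  have hpos : 0 < 1 - t ^ 2 := by nlinarith
  have hc : 0 < Real.sqrt (1 - t ^ 2) := Real.sqrt_pos.2 hpos
  have hc2 : Real.sqrt (1 - t ^ 2) ^ 2 = 1 - t ^ 2 := Real.sq_sqrt hpos.le
  unfold phiW psiW
  have key : 1 + (t / Real.sqrt (1 - t ^ 2)) ^ 2 = (1 / Real.sqrt (1 - t ^ 2)) ^ 2 := by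
    field_simp
    linarith [hc2]
  rw [key, Real.sqrt_sq (by positivity)]
  field_simp

lemma psiW_phiW {x : ℝ} (hx : 0 ≤ x) : psiW (phiW x) = x := by
  have hc : 0 < Real.sqrt (1 + x ^ 2) := sqrt1p_pos x
  have hc2 : Real.sqrt (1 + x ^ 2) ^ 2 = 1 + x ^ 2 := Real.sq_sqrt (by nlinarith)
  unfold phiW psiW
  have key : 1 - (x / Real.sqrt (1 + x ^ 2)) ^ 2 = (1 / Real.sqrt (1 + x ^ 2)) ^ 2 := by
    field_simp
    linarith [hc2]
  rw [key, Real.sqrt_sq (by positivity)]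
  field_simp


section EpiAux

variable {X : Type*} [MetricSpace X] {f : X → ℝ}

lemma continuousOn_subtype_mk' {α β : Type*} [TopologicalSpace α] [TopologicalSpace β]
    {p : β → Prop} {f : α → β} {s : Set α} (hf : ContinuousOn f s) (hp : ∀ x, p (f x)) :
    ContinuousOn (fun x => (⟨f x, hp x⟩ : Subtype p)) s := by
  rw [Topology.IsEmbedding.subtypeVal.isInducing.continuousOn_iff]
  exact hf

variable {X : Type*} [MetricSpace X] {f : X → ℝ}

lemma epiDist_self (p : {p : X × ℝ // f p.1 ≤ p.2}) : epiDist f p p = 0 := by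
  simp [epiDist]

lemma dist_le_epiDist (p q : {p : X × ℝ // f p.1 ≤ p.2}) :
    dist p.1.1 q.1.1 ≤ epiDist f p q := by
  unfold epiDist
  calc dist p.1.1 q.1.1 = Real.sqrt (dist p.1.1 q.1.1 ^ 2) := (Real.sqrt_sq dist_nonneg).symm
    _ ≤ _ := Real.sqrt_le_sqrt (by nlinarith [sq_nonneg (p.1.2 - q.1.2)])

lemma abs_sub_le_epiDist (p q : {p : X × ℝ // f p.1 ≤ p.2}) :
    |p.1.2 - q.1.2| ≤ epiDist f p q := by
  unfold epiDist
  calc |p.1.2 - q.1.2| = Real.sqrt ((p.1.2 - q.1.2) ^ 2) := (Real.sqrt_sq_eq_abs _).symm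
    _ ≤ _ := Real.sqrt_le_sqrt (by nlinarith [sq_nonneg (dist p.1.1 q.1.1)])

lemma zero_mem_slopeSetD {Y : Type*} [TopologicalSpace Y] (dY : Y → Y → ℝ) (g : Y → ℝ)
    (u : Y) (h0 : ∀ v, dY v v = 0) : (0 : ℝ) ∈ slopeSetD dY g u :=
  ⟨le_refl _, 1, one_pos, fun v _ => v, continuous_fst.continuousOn,
    fun v _ t ht => ⟨by rw [h0]; exact ht.1, by simp⟩⟩

lemma slopeSetD_downward {Y : Type*} [TopologicalSpace Y] {dY : Y → Y → ℝ} {g : Y → ℝ}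
    {u : Y} {σ σ' : ℝ} (h : σ ∈ slopeSetD dY g u) (h0 : 0 ≤ σ') (h1 : σ' ≤ σ) :
    σ' ∈ slopeSetD dY g u := by
  obtain ⟨_, δ, hδ, H, Hc, Hp⟩ := h
  refine ⟨h0, δ, hδ, H, Hc, fun v hv t ht => ?_⟩
  obtain ⟨hd, hg⟩ := Hp v hv t ht
  exact ⟨hd, hg.trans (by nlinarith [ht.1])⟩

lemma epiSlope_le_one (p₀ : {p : X × ℝ // f p.1 ≤ p.2}) {σ : ℝ}
    (hσ : σ ∈ slopeSetD (epiDist f) (epiFun f) p₀) : σ ≤ 1 := by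
  obtain ⟨hσ0, δ, hδ, H, _, Hp⟩ := hσ
  have h00 : epiDist f p₀ p₀ < δ := by rw [epiDist_self]; exact hδ
  obtain ⟨hd, hg⟩ := Hp p₀ h00 δ ⟨hδ.le, le_refl _⟩
  have habs := abs_sub_le_epiDist (H p₀ δ) p₀
  rw [abs_le] at habs
  have : σ * δ ≤ δ := by
    have h1 : (H p₀ δ).1.2 ≤ p₀.1.2 - σ * δ := hg
    linarith [habs.1, habs.2, hd]
  exact le_of_mul_le_mul_right (by linarith) hδ

lemma claimA (hf : Continuous f) (u : X) {σ : ℝ} (hσ : σ ∈ slopeSetD dist f u) :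
    σ / Real.sqrt (1 + σ ^ 2) ∈
      slopeSetD (epiDist f) (epiFun f) ⟨(u, f u), le_refl _⟩ := by
  obtain ⟨hσ0, δ, hδ, H, Hc, Hp⟩ := hσ
  have hc1 : (1:ℝ) ≤ Real.sqrt (1 + σ ^ 2) := by
    nlinarith [Real.sq_sqrt (show (0:ℝ) ≤ 1 + σ ^ 2 by positivity),
      Real.sqrt_nonneg (1 + σ ^ 2), sq_nonneg (Real.sqrt (1 + σ ^ 2) - 1)]
  have hc0 : (0:ℝ) < Real.sqrt (1 + σ ^ 2) := lt_of_lt_of_le one_pos hc1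
  set c := Real.sqrt (1 + σ ^ 2) with hcdef
  refine ⟨div_nonneg hσ0 hc0.le, δ, hδ, fun p t =>
    ⟨(H p.1.1 (t / c), max (p.1.2 - σ * (t / c)) (f (H p.1.1 (t / c)))),
      le_max_right _ _⟩, ?_, ?_⟩
  · -- continuity
    have hmaps : Set.MapsTo (fun q : {p : X × ℝ // f p.1 ≤ p.2} × ℝ => (q.1.1.1, q.2 / c))
        ({v | epiDist f ⟨(u, f u), le_refl _⟩ v < δ} ×ˢ Set.Icc (0:ℝ) δ)
        ({v | dist u v < δ} ×ˢ Set.Icc 0 δ) := by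
      rintro ⟨p, t⟩ ⟨hp, ht⟩
      constructor
      · exact lt_of_le_of_lt
          (show dist u p.1.1 ≤ _ from dist_le_epiDist ⟨(u, f u), le_refl _⟩ p) hp
      · exact ⟨div_nonneg ht.1 hc0.le, (div_le_self ht.1 hc1).trans ht.2⟩
    have hA : ContinuousOn (fun q : {p : X × ℝ // f p.1 ≤ p.2} × ℝ => H q.1.1.1 (q.2 / c))
        ({v | epiDist f ⟨(u, f u), le_refl _⟩ v < δ} ×ˢ Set.Icc (0:ℝ) δ) :=
      Hc.comp (by fun_prop) hmaps
    have hB : ContinuousOn (fun q : {p : X × ℝ // f p.1 ≤ p.2} × ℝ =>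
        max (q.1.1.2 - σ * (q.2 / c)) (f (H q.1.1.1 (q.2 / c))))
        ({v | epiDist f ⟨(u, f u), le_refl _⟩ v < δ} ×ˢ Set.Icc (0:ℝ) δ) := by
      exact ContinuousOn.sup (by fun_prop) (hf.comp_continuousOn hA)
    exact continuousOn_subtype_mk' (hA.prodMk hB) _
  · rintro ⟨⟨v, μ⟩, hvμ⟩ hp t ht
    have hv : dist u v < δ := lt_of_le_of_lt
      (show dist u v ≤ _ from dist_le_epiDist ⟨(u, f u), le_refl _⟩ ⟨(v, μ), hvμ⟩) hp
    have hs0 : 0 ≤ t / c := div_nonneg ht.1 hc0.le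
    have hsδ : t / c ≤ δ := (div_le_self ht.1 hc1).trans ht.2
    obtain ⟨hd, hg⟩ := Hp v hv (t / c) ⟨hs0, hsδ⟩
    have hvμ' : f v ≤ μ := hvμ
    have hmax : max (μ - σ * (t / c)) (f (H v (t / c))) = μ - σ * (t / c) :=
      max_eq_left (hg.trans (by linarith))
    constructor
    · show Real.sqrt _ ≤ t
      simp only [hmax]
      have hsum : dist (H v (t / c)) v ^ 2 + (μ - σ * (t / c) - μ) ^ 2
          ≤ (1 + σ ^ 2) * (t / c) ^ 2 := by
        have h1 : dist (H v (t/c)) v ^ 2 ≤ (t/c) ^ 2 := pow_le_pow_left₀ dist_nonneg hd 2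
        nlinarith
      calc Real.sqrt (dist (H v (t / c)) v ^ 2 + (μ - σ * (t / c) - μ) ^ 2)
          ≤ Real.sqrt ((1 + σ ^ 2) * (t / c) ^ 2) := Real.sqrt_le_sqrt hsum
        _ = c * (t / c) := by
            rw [Real.sqrt_mul (by positivity), Real.sqrt_sq hs0]
        _ = t := by field_simp
    · show max (μ - σ * (t / c)) (f (H v (t / c))) ≤ μ - σ / c * t
      rw [hmax]
      have h2 : σ / c * t = σ * (t / c) := by ring
      linarith [h2.le]

lemma claimB (hf : Continuous f) (u : X) {τ : ℝ} (hτ1 : τ < 1)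
    (hτ : τ ∈ slopeSetD (epiDist f) (epiFun f) ⟨(u, f u), le_refl _⟩) :
    τ / Real.sqrt (1 - τ ^ 2) ∈ slopeSetD dist f u := by
  obtain ⟨hτ0, δ, hδ, H, Hc, Hp⟩ := hτ
  have hpos : (0:ℝ) < 1 - τ ^ 2 := by nlinarith
  have hc0 : 0 < Real.sqrt (1 - τ ^ 2) := Real.sqrt_pos.2 hpos
  have hc2 : Real.sqrt (1 - τ ^ 2) ^ 2 = 1 - τ ^ 2 := Real.sq_sqrt hpos.le
  have hcle : Real.sqrt (1 - τ ^ 2) ≤ 1 := by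
    nlinarith [Real.sqrt_nonneg (1 - τ ^ 2), sq_nonneg τ]
  set c := Real.sqrt (1 - τ ^ 2) with hcdef
  obtain ⟨δ₂, hδ₂, hδ₂f⟩ := Metric.continuous_iff.1 hf u (δ / 2) (by linarith)
  set δ' := min (min δ₂ (δ / 2)) (δ * c) with hδ'def
  have hδ'pos : 0 < δ' := lt_min (lt_min hδ₂ (by linarith)) (by positivity)
  -- key: points near u lift into the δ-ball around (u, f u)
  have hlift : ∀ v : X, dist u v < δ' →
      epiDist f ⟨(u, f u), le_refl _⟩ ⟨(v, f v), le_refl _⟩ < δ := by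
    intro v hv
    have h1 : dist u v < δ₂ := lt_of_lt_of_le hv ((min_le_left _ _).trans (min_le_left _ _))
    have h2 : dist u v < δ / 2 := lt_of_lt_of_le hv ((min_le_left _ _).trans (min_le_right _ _))
    have h3 : |f u - f v| < δ / 2 := by
      have := hδ₂f v (by rwa [dist_comm])
      rwa [Real.dist_eq, abs_sub_comm] at this
    show Real.sqrt _ < δ
    rw [Real.sqrt_lt' hδ]
    have := abs_nonneg (f u - f v)
    have := dist_nonneg (x := u) (y := v)
    nlinarith [sq_abs (f u - f v)]
  refine ⟨div_nonneg hτ0 hc0.le, δ', hδ'pos,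
    fun v r => ((H ⟨(v, f v), le_refl _⟩ (r / c) : {p : X × ℝ // f p.1 ≤ p.2}) : X × ℝ).1,
    ?_, ?_⟩
  · -- continuity
    have hmaps : Set.MapsTo
        (fun q : X × ℝ => ((⟨(q.1, f q.1), le_refl _⟩ : {p : X × ℝ // f p.1 ≤ p.2}), q.2 / c))
        ({v | dist u v < δ'} ×ˢ Set.Icc 0 δ')
        ({v | epiDist f ⟨(u, f u), le_refl _⟩ v < δ} ×ˢ Set.Icc 0 δ) := by
      rintro ⟨v, r⟩ ⟨hv, hr⟩
      refine ⟨hlift v hv, div_nonneg hr.1 hc0.le, ?_⟩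
      rw [div_le_iff₀ hc0]
      calc r ≤ δ' := hr.2
        _ ≤ δ * c := min_le_right _ _
    have hinner : Continuous
        (fun q : X × ℝ => ((⟨(q.1, f q.1), le_refl _⟩ : {p : X × ℝ // f p.1 ≤ p.2}), q.2 / c)) := by
      refine Continuous.prodMk (Continuous.subtype_mk ?_ _) (by fun_prop)
      fun_prop
    have hcomp := Hc.comp hinner.continuousOn hmaps
    exact (continuous_fst.comp continuous_subtype_val).comp_continuousOn hcomp
  · intro v hv r hr
    have hs0 : 0 ≤ r / c := div_nonneg hr.1 hc0.le
    have hsδ : r / c ≤ δ := by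
      rw [div_le_iff₀ hc0]
      calc r ≤ δ' := hr.2
        _ ≤ δ * c := min_le_right _ _
    obtain ⟨hd, hg⟩ := Hp ⟨(v, f v), le_refl _⟩ (hlift v hv) (r / c) ⟨hs0, hsδ⟩
    set q := H ⟨(v, f v), le_refl _⟩ (r / c) with hq
    have hd2 : dist (q : X × ℝ).1 v ^ 2 + ((q : X × ℝ).2 - f v) ^ 2 ≤ (r / c) ^ 2 := by
      have h := hd
      unfold epiDist at h
      nlinarith [Real.sq_sqrt (show (0:ℝ) ≤ dist (q : X × ℝ).1 v ^ 2 + ((q : X × ℝ).2 - f v) ^ 2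
        by positivity), Real.sqrt_nonneg (dist (q : X × ℝ).1 v ^ 2 + ((q : X × ℝ).2 - f v) ^ 2)]
    have hy : (q : X × ℝ).2 ≤ f v - τ * (r / c) := hg
    constructor
    · -- distance bound
      apply le_of_sq_le_sq' dist_nonneg hr.1
      have hτs : τ * (r / c) ≥ 0 := mul_nonneg hτ0 hs0
      have h5 : ((q : X × ℝ).2 - f v) ^ 2 ≥ τ ^ 2 * (r / c) ^ 2 := by nlinarith
      have h6 : dist (q : X × ℝ).1 v ^ 2 ≤ (1 - τ ^ 2) * (r / c) ^ 2 := by nlinarith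
      calc dist (q : X × ℝ).1 v ^ 2 ≤ (1 - τ ^ 2) * (r / c) ^ 2 := h6
        _ = r ^ 2 := by rw [← hc2]; field_simp
    · -- function decrease
      have hfq : f (q : X × ℝ).1 ≤ (q : X × ℝ).2 := q.2
      have heq : τ / c * r = τ * (r / c) := by ring
      linarith [heq.le]

lemma one_mem_epiSlope (hf : Continuous f) (u : X) {ξ : ℝ} (hlt : f u < ξ) (hξ : f u ≤ ξ) :
    (1 : ℝ) ∈ slopeSetD (epiDist f) (epiFun f) ⟨(u, ξ), hξ⟩ := by
  obtain ⟨δ₁, hδ₁, hδ₁f⟩ := Metric.continuous_iff.1 hf u ((ξ - f u) / 2) (by linarith)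
  set δ := min δ₁ ((ξ - f u) / 4) with hδdef
  have hδpos : 0 < δ := lt_min hδ₁ (by linarith)
  have hδ4 : δ ≤ (ξ - f u) / 4 := min_le_right _ _
  refine ⟨zero_le_one, δ, hδpos, fun p t =>
    ⟨(p.1.1, max (p.1.2 - t) (f p.1.1)), le_max_right _ _⟩, ?_, ?_⟩
  · apply continuousOn_subtype_mk'
    apply ContinuousOn.prodMk (by fun_prop)
    exact ContinuousOn.sup (by fun_prop) (by fun_prop)
  · rintro ⟨⟨v, μ⟩, hvμ⟩ hp t ht
    have hv : dist u v < δ := lt_of_le_of_lt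
      (show dist u v ≤ _ from dist_le_epiDist ⟨(u, ξ), hξ⟩ ⟨(v, μ), hvμ⟩) hp
    have hμ : |ξ - μ| < δ := lt_of_le_of_lt
      (show |ξ - μ| ≤ _ from abs_sub_le_epiDist ⟨(u, ξ), hξ⟩ ⟨(v, μ), hvμ⟩) hp
    have hfv : |f v - f u| < (ξ - f u) / 2 := by
      have := hδ₁f v (by rw [dist_comm]; exact lt_of_lt_of_le hv (min_le_left _ _))
      rwa [Real.dist_eq] at this
    rw [abs_lt] at hμ hfv
    have hmax : max (μ - t) (f v) = μ - t := by
      apply max_eq_left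
      have h1 : f v < ξ - (ξ - f u) / 2 := by linarith
      have h2 : μ - t ≥ μ - δ := by linarith [ht.2]
      linarith
    constructor
    · show Real.sqrt _ ≤ t
      simp only [hmax]
      have : dist v v ^ 2 + (μ - t - μ) ^ 2 = t ^ 2 := by simp [dist_self]
      rw [this, Real.sqrt_sq ht.1]
    · show max (μ - t) (f v) ≤ μ - 1 * t
      rw [hmax]; linarith

end EpiAux

/-- for `f : X → ℝ` continuous, the weak slope of the epigraph function
`G_f` at `(u, f u)` (w.r.t. the metric `d₁`) equals `|df|(u)/√(1+|df|(u)²)` when the weak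
slope `|df|(u)` is finite, and equals `1` when `|df|(u) = +∞` or when `f(u) < ξ`.
In particular `|dG_f|(u,ξ) < 1` forces `ξ = f(u)`. -/
theorem stmt15 {X : Type*} [MetricSpace X] (f : X → ℝ) (hf : Continuous f)
    (u : X) (ξ : ℝ) (hξ : f u ≤ ξ) :
    (BddAbove (slopeSetD dist f u) →
      sSup (slopeSetD (epiDist f) (epiFun f) ⟨(u, f u), le_refl _⟩) =
        sSup (slopeSetD dist f u) / Real.sqrt (1 + sSup (slopeSetD dist f u) ^ 2)) ∧
    (¬ BddAbove (slopeSetD dist f u) →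
      sSup (slopeSetD (epiDist f) (epiFun f) ⟨(u, f u), le_refl _⟩) = 1) ∧
    (f u < ξ → sSup (slopeSetD (epiDist f) (epiFun f) ⟨(u, ξ), hξ⟩) = 1) ∧
    (sSup (slopeSetD (epiDist f) (epiFun f) ⟨(u, ξ), hξ⟩) < 1 → ξ = f u) := by
  have hS0 : (0:ℝ) ∈ slopeSetD dist f u :=
    zero_mem_slopeSetD dist f u (fun v => dist_self v)
  have hSne : (slopeSetD dist f u).Nonempty := ⟨0, hS0⟩
  have hSG0 : (0:ℝ) ∈ slopeSetD (epiDist f) (epiFun f) ⟨(u, f u), le_refl _⟩ :=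
    zero_mem_slopeSetD _ _ _ (fun v => epiDist_self v)
  have hSGbdd : BddAbove (slopeSetD (epiDist f) (epiFun f) ⟨(u, f u), le_refl _⟩) :=
    ⟨1, fun τ hτ => epiSlope_le_one _ hτ⟩
  have hSG0' : (0:ℝ) ∈ slopeSetD (epiDist f) (epiFun f) ⟨(u, ξ), hξ⟩ :=
    zero_mem_slopeSetD _ _ _ (fun v => epiDist_self v)
  have key3 : f u < ξ → sSup (slopeSetD (epiDist f) (epiFun f) ⟨(u, ξ), hξ⟩) = 1 := by
    intro hlt
    have h1 := one_mem_epiSlope hf u hlt hξ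
    exact le_antisymm
      (csSup_le ⟨1, h1⟩ (fun τ hτ => epiSlope_le_one _ hτ))
      (le_csSup ⟨1, fun τ hτ => epiSlope_le_one _ hτ⟩ h1)
  refine ⟨?_, ?_, key3, ?_⟩
  · intro hb
    have hs0 : 0 ≤ sSup (slopeSetD dist f u) := le_csSup hb hS0
    show _ = phiW (sSup (slopeSetD dist f u))
    apply le_antisymm
    · apply csSup_le ⟨0, hSG0⟩
      intro τ hτ
      rcases lt_or_ge τ 1 with h1 | h1
      · have hm : psiW τ ∈ slopeSetD dist f u := claimB hf u h1 hτ
        have hle : psiW τ ≤ sSup (slopeSetD dist f u) := le_csSup hb hm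
        calc τ = phiW (psiW τ) := (phiW_psiW hτ.1 h1).symm
          _ ≤ phiW (sSup (slopeSetD dist f u)) := phiW_mono (psiW_nonneg hτ.1) hle
      · exfalso
        have hτ1 : τ = 1 := le_antisymm (epiSlope_le_one _ hτ) h1
        have hmem : phiW (sSup (slopeSetD dist f u) + 1) ∈
            slopeSetD (epiDist f) (epiFun f) ⟨(u, f u), le_refl _⟩ :=
          slopeSetD_downward hτ (phiW_nonneg (by linarith))
            (hτ1 ▸ (phiW_lt_one (sSup (slopeSetD dist f u) + 1)).le)
        have hmem2 : psiW (phiW (sSup (slopeSetD dist f u) + 1)) ∈ slopeSetD dist f u :=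
          claimB hf u (phiW_lt_one _) hmem
        rw [psiW_phiW (by linarith)] at hmem2
        have := le_csSup hb hmem2
        linarith
    · by_contra hlt
      push_neg at hlt
      obtain ⟨c0, hc1, hc2⟩ := exists_between hlt
      have hT0 : 0 ≤ sSup (slopeSetD (epiDist f) (epiFun f) ⟨(u, f u), le_refl _⟩) :=
        le_csSup hSGbdd hSG0
      have hc0 : 0 ≤ c0 := le_trans hT0 hc1.le
      have hc01 : c0 < 1 := hc2.trans (phiW_lt_one _)
      have hcs : psiW c0 < sSup (slopeSetD dist f u) := by
        apply lt_of_phiW_lt (psiW_nonneg hc0)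
        rwa [phiW_psiW hc0 hc01]
      obtain ⟨σ', hσ'S, hσ'⟩ := exists_lt_of_lt_csSup hSne hcs
      have hmem : psiW c0 ∈ slopeSetD dist f u :=
        slopeSetD_downward hσ'S (psiW_nonneg hc0) hσ'.le
      have hmem2 : phiW (psiW c0) ∈
          slopeSetD (epiDist f) (epiFun f) ⟨(u, f u), le_refl _⟩ := claimA hf u hmem
      rw [phiW_psiW hc0 hc01] at hmem2
      have := le_csSup hSGbdd hmem2
      linarith
  · intro hnb
    apply le_antisymm (csSup_le ⟨0, hSG0⟩ (fun τ hτ => epiSlope_le_one _ hτ))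
    by_contra h
    push_neg at h
    have hT0 : 0 ≤ sSup (slopeSetD (epiDist f) (epiFun f) ⟨(u, f u), le_refl _⟩) :=
      le_csSup hSGbdd hSG0
    apply hnb
    refine ⟨psiW (sSup (slopeSetD (epiDist f) (epiFun f) ⟨(u, f u), le_refl _⟩)),
      fun σ hσ => ?_⟩
    have hm : phiW σ ∈ slopeSetD (epiDist f) (epiFun f) ⟨(u, f u), le_refl _⟩ :=
      claimA hf u hσ
    have h1 : phiW σ ≤ sSup (slopeSetD (epiDist f) (epiFun f) ⟨(u, f u), le_refl _⟩) :=
      le_csSup hSGbdd hm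
    have h2 : phiW σ ≤ phiW (psiW (sSup (slopeSetD (epiDist f) (epiFun f)
        ⟨(u, f u), le_refl _⟩))) := by rwa [phiW_psiW hT0 h]
    exact le_of_phiW_le (psiW_nonneg hT0) h2
  · intro hlt1
    by_contra hne
    have := key3 (lt_of_le_of_ne hξ (Ne.symm hne))
    linarith
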